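/- arXiv:1605.03257 — 4 statements merged into one kernel-verified Lean document; each statement's English description precedes it below -/
import Mathlib

section
/- Let F be a finite field of characteristic 3 and let x ∈ SL_3(F) be an element of order 3. Then x normalizes some nontrivial 2-subgroup of SL_3(F): there exists a subgroup P of SL_3(F) with P nontrivial, P a 2-group, and x * P * x⁻¹ = P. -/
open Matrix

namespace SL3TwoSubgroupAux

variable {F : Type*} [Field F] [CharP F 3]

lemma neg_one_ne_one' : (-1 : F) ≠ 1 := by
  intro h
  have h2 : ((2 : ℕ) : F) = 0 := by push_cast; linear_combination -h
  have := (CharP.cast_eq_zero_iff F 3 2).mp h2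
  omega

/-- Conjugation by an invertible matrix, as an automorphism of `SL₃`. -/
def conjSL (u : (Matrix (Fin 3) (Fin 3) F)ˣ) :
    Matrix.SpecialLinearGroup (Fin 3) F ≃* Matrix.SpecialLinearGroup (Fin 3) F where
  toFun a := ⟨u.val * a.val * u⁻¹.val, by
    have : (u.val * a.val * u⁻¹.val).det = (u.val * u⁻¹.val).det := by
      rw [Matrix.det_mul, Matrix.det_mul, Matrix.det_mul, a.prop, mul_one]
    rw [this, u.mul_inv, Matrix.det_one]⟩
  invFun a := ⟨u⁻¹.val * a.val * u.val, by
    have : ((u⁻¹.val : Matrix (Fin 3) (Fin 3) F) * a.val * u.val).det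
        = ((u⁻¹.val : Matrix (Fin 3) (Fin 3) F) * u.val).det := by
      rw [Matrix.det_mul, Matrix.det_mul, Matrix.det_mul, a.prop, mul_one]
    rw [this, u.inv_mul, Matrix.det_one]⟩
  left_inv a := by
    apply Subtype.ext
    show u⁻¹.val * (u.val * a.val * u⁻¹.val) * u.val = a.val
    calc u⁻¹.val * (u.val * a.val * u⁻¹.val) * u.val
        = (u⁻¹.val * u.val) * a.val * (u⁻¹.val * u.val) := by noncomm_ring
      _ = a.val := by rw [u.inv_mul]; noncomm_ring
  right_inv a := by
    apply Subtype.ext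
    show u.val * (u⁻¹.val * a.val * u.val) * u⁻¹.val = a.val
    calc u.val * (u⁻¹.val * a.val * u.val) * u⁻¹.val
        = (u.val * u⁻¹.val) * a.val * (u.val * u⁻¹.val) := by noncomm_ring
      _ = a.val := by rw [u.mul_inv]; noncomm_ring
  map_mul' a b := by
    apply Subtype.ext
    show u.val * (a.val * b.val) * u⁻¹.val
      = (u.val * a.val * u⁻¹.val) * (u.val * b.val * u⁻¹.val)
    calc u.val * (a.val * b.val) * u⁻¹.val
        = u.val * a.val * 1 * b.val * u⁻¹.val := by noncomm_ring
      _ = u.val * a.val * (u⁻¹.val * u.val) * b.val * u⁻¹.val := by rw [u.inv_mul]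
      _ = (u.val * a.val * u⁻¹.val) * (u.val * b.val * u⁻¹.val) := by noncomm_ring

/-- Subgroup of sign-diagonal matrices in SL₃ whose diagonal satisfies `Q`. -/
def sdiag (Q : (Fin 3 → F) → Prop) (hQ1 : Q 1)
    (hQm : ∀ f g, Q f → Q g → Q (fun i => f i * g i)) :
    Subgroup (Matrix.SpecialLinearGroup (Fin 3) F) where
  carrier := {a | ∃ f : Fin 3 → F, (∀ i, f i * f i = 1) ∧ Q f ∧ a.val = Matrix.diagonal f}
  one_mem' := ⟨1, fun i => by simp, hQ1, Matrix.diagonal_one.symm⟩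
  mul_mem' := by
    rintro a b ⟨f, hf, hfQ, hfa⟩ ⟨g, hg, hgQ, hgb⟩
    refine ⟨fun i => f i * g i, fun i => by rw [mul_mul_mul_comm, hf i, hg i, one_mul],
      hQm f g hfQ hgQ, ?_⟩
    show (a * b).val = _
    rw [Matrix.SpecialLinearGroup.coe_mul, hfa, hgb, Matrix.diagonal_mul_diagonal]
  inv_mem' := by
    rintro a ⟨f, hf, hfQ, hfa⟩
    have hsq : a * a = 1 := by
      apply Subtype.ext
      show (a * a).val = _
      rw [Matrix.SpecialLinearGroup.coe_mul, hfa, Matrix.diagonal_mul_diagonal]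
      have : (fun i => f i * f i) = fun _ => (1 : F) := funext hf
      rw [this]; simp
    have h : a⁻¹ = a := by
      rw [← mul_one a⁻¹, ← hsq, ← mul_assoc, inv_mul_cancel, one_mul]
    rw [h]
    exact ⟨f, hf, hfQ, hfa⟩

omit [CharP F 3] in
lemma sdiag_sq {Q : (Fin 3 → F) → Prop} {hQ1 : Q 1}
    {hQm : ∀ f g, Q f → Q g → Q (fun i => f i * g i)}
    {a : Matrix.SpecialLinearGroup (Fin 3) F} (ha : a ∈ sdiag Q hQ1 hQm) : a * a = 1 := by
  obtain ⟨f, hf, -, hfa⟩ := ha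
  apply Subtype.ext
  show (a * a).val = _
  rw [Matrix.SpecialLinearGroup.coe_mul, hfa, Matrix.diagonal_mul_diagonal]
  have : (fun i => f i * f i) = fun _ => (1 : F) := funext hf
  rw [this]; simp

omit [CharP F 3] in
lemma sdiag_isPGroup {Q : (Fin 3 → F) → Prop} {hQ1 : Q 1}
    {hQm : ∀ f g, Q f → Q g → Q (fun i => f i * g i)} :
    IsPGroup 2 (sdiag Q hQ1 hQm) := by
  intro a
  refine ⟨1, ?_⟩
  have := sdiag_sq a.prop
  apply Subtype.ext
  simpa [pow_succ, pow_zero] using this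

/-- `diag(-1,-1,1)` as an element of SL₃. -/
def dEl : Matrix.SpecialLinearGroup (Fin 3) F :=
  ⟨Matrix.diagonal ![-1, -1, 1], by
    rw [Matrix.det_diagonal, Fin.prod_univ_three]
    norm_num
    rfl⟩

lemma dEl_ne_one : (dEl : Matrix.SpecialLinearGroup (Fin 3) F) ≠ 1 := by
  intro h
  have := congrArg (fun a : Matrix.SpecialLinearGroup (Fin 3) F => a.val 0 0) h
  simp [dEl, Matrix.diagonal] at this
  exact neg_one_ne_one' this

omit [CharP F 3] in
lemma dEl_mem {Q : (Fin 3 → F) → Prop} {hQ1 : Q 1}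
    {hQm : ∀ f g, Q f → Q g → Q (fun i => f i * g i)}
    (hQ : Q ![-1, -1, 1]) : dEl ∈ sdiag Q hQ1 hQm := by
  refine ⟨![-1, -1, 1], fun i => ?_, hQ, rfl⟩
  fin_cases i <;> norm_num

def cmat : Matrix (Fin 3) (Fin 3) F := !![0,0,1; 1,0,0; 0,1,0]
def mmat : Matrix (Fin 3) (Fin 3) F := !![0,-1,0; 1,2,0; 0,0,1]

def rho : Fin 3 → Fin 3 := ![2, 0, 1]

omit [CharP F 3] in
lemma c_diag (f : Fin 3 → F) :
    cmat * Matrix.diagonal f = Matrix.diagonal (f ∘ rho) * cmat := by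
  ext i j
  fin_cases i <;> fin_cases j <;>
    simp [cmat, rho, Matrix.mul_apply, Fin.sum_univ_three, Matrix.diagonal,
      Matrix.vecHead, Matrix.vecTail]

omit [CharP F 3] in
lemma m_diag (f : Fin 3 → F) (hf : f 0 = f 1) :
    mmat * Matrix.diagonal f = Matrix.diagonal f * mmat := by
  ext i j
  fin_cases i <;> fin_cases j <;>
    simp [mmat, Matrix.mul_apply, Fin.sum_univ_three, Matrix.diagonal,
      Matrix.vecHead, Matrix.vecTail, hf, mul_comm]

omit [CharP F 3] in
lemma cmat_det : (cmat : Matrix (Fin 3) (Fin 3) F).det = 1 := by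
  rw [Matrix.det_fin_three]; simp [cmat]

omit [CharP F 3] in
lemma mmat_det : (mmat : Matrix (Fin 3) (Fin 3) F).det = 1 := by
  rw [Matrix.det_fin_three]; simp [mmat]

omit [CharP F 3] in
lemma cmat_cube : (cmat : Matrix (Fin 3) (Fin 3) F) * cmat * cmat = 1 := by
  ext i j
  fin_cases i <;> fin_cases j <;>
    simp [cmat, Matrix.mul_apply, Fin.sum_univ_three, Matrix.one_apply,
      Matrix.vecHead, Matrix.vecTail]

/-- `cmat` as an element of SL₃. -/
def cEl : Matrix.SpecialLinearGroup (Fin 3) F := ⟨cmat, cmat_det⟩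

/-- `mmat` as an element of SL₃. -/
def mEl : Matrix.SpecialLinearGroup (Fin 3) F := ⟨mmat, mmat_det⟩

omit [CharP F 3] in
lemma cEl_conj_mem {a : Matrix.SpecialLinearGroup (Fin 3) F}
    (ha : a ∈ sdiag (F := F) (fun _ => True) trivial (fun _ _ _ _ => trivial)) :
    cEl * a * cEl⁻¹ ∈ sdiag (F := F) (fun _ => True) trivial (fun _ _ _ _ => trivial) := by
  obtain ⟨f, hf, -, hfa⟩ := ha
  refine ⟨f ∘ rho, fun i => hf (rho i), trivial, ?_⟩
  show ((cEl * a) * cEl⁻¹).val = _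
  rw [Matrix.SpecialLinearGroup.coe_mul, Matrix.SpecialLinearGroup.coe_mul]
  have h1 : (cEl : Matrix.SpecialLinearGroup (Fin 3) F).val * a.val
      = Matrix.diagonal (f ∘ rho) * cEl.val := by
    rw [hfa]; exact c_diag f
  rw [h1, mul_assoc, ← Matrix.SpecialLinearGroup.coe_mul, mul_inv_cancel,
    Matrix.SpecialLinearGroup.coe_one, mul_one]

omit [CharP F 3] in
lemma cEl_inv : (cEl : Matrix.SpecialLinearGroup (Fin 3) F)⁻¹ = cEl * cEl := by
  have h : (cEl * cEl) * cEl = (1 : Matrix.SpecialLinearGroup (Fin 3) F) := by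
    apply Subtype.ext
    rw [Matrix.SpecialLinearGroup.coe_mul, Matrix.SpecialLinearGroup.coe_mul,
      Matrix.SpecialLinearGroup.coe_one]
    exact cmat_cube
  exact inv_eq_of_mul_eq_one_left h

omit [CharP F 3] in
lemma cEl_cube : (cEl : Matrix.SpecialLinearGroup (Fin 3) F) ^ 3 = 1 := by
  apply Subtype.ext
  rw [Matrix.SpecialLinearGroup.coe_pow, pow_succ, pow_succ, pow_one,
    Matrix.SpecialLinearGroup.coe_one]
  exact cmat_cube

omit [CharP F 3] in
lemma cEl_mem_normalizer :
    (cEl : Matrix.SpecialLinearGroup (Fin 3) F) ∈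
      Subgroup.normalizer ((sdiag (F := F) (fun _ => True) trivial (fun _ _ _ _ => trivial)) : Set (Matrix.SpecialLinearGroup (Fin 3) F)) := by
  rw [Subgroup.mem_normalizer_iff]
  intro a
  constructor
  · exact fun ha => cEl_conj_mem ha
  · intro ha
    have h2 := cEl_conj_mem (cEl_conj_mem ha)
    have heq : cEl * (cEl * (cEl * a * cEl⁻¹) * cEl⁻¹) * cEl⁻¹ = a := by
      have : cEl * (cEl * (cEl * a * cEl⁻¹) * cEl⁻¹) * cEl⁻¹
          = cEl ^ 3 * a * (cEl ^ 3)⁻¹ := by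
        have e : (cEl : Matrix.SpecialLinearGroup (Fin 3) F) ^ 3 = cEl * cEl * cEl := by
          rw [pow_succ, pow_succ, pow_one]
        rw [e]; group
      rw [this, cEl_cube, one_mul, inv_one, mul_one]
    rwa [heq] at h2

omit [CharP F 3] in
lemma blockQmul : ∀ f g : Fin 3 → F, f 0 = f 1 → g 0 = g 1 →
    (fun i => f i * g i) 0 = (fun i => f i * g i) 1 := by
  intro f g hf hg
  show f 0 * g 0 = f 1 * g 1
  rw [hf, hg]

omit [CharP F 3] in
lemma mEl_mem_normalizer :
    (mEl : Matrix.SpecialLinearGroup (Fin 3) F) ∈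
      Subgroup.normalizer ((sdiag (F := F) (fun f => f 0 = f 1) rfl blockQmul) : Set (Matrix.SpecialLinearGroup (Fin 3) F)) := by
  have hcomm : ∀ a ∈ sdiag (F := F) (fun f => f 0 = f 1) rfl blockQmul,
      mEl * a = a * mEl := by
    rintro a ⟨f, hf, hfQ, hfa⟩
    apply Subtype.ext
    rw [Matrix.SpecialLinearGroup.coe_mul, Matrix.SpecialLinearGroup.coe_mul, hfa]
    exact m_diag f hfQ
  rw [Subgroup.mem_normalizer_iff]
  intro a
  constructor
  · intro ha
    have : mEl * a * mEl⁻¹ = a := by rw [hcomm a ha, mul_assoc, mul_inv_cancel, mul_one]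
    rwa [this]
  · intro ha
    have hb := hcomm _ ha
    have h1 : mEl * a * mEl⁻¹ * mEl = mEl * a := by group
    rw [h1] at hb
    have h2 : mEl * a * mEl⁻¹ = a := mul_left_cancel hb
    rwa [h2] at ha

omit [CharP F 3] in
lemma exists_mulVec_ne_zero {A : Matrix (Fin 3) (Fin 3) F} (hA : A ≠ 0) :
    ∃ v, A.mulVec v ≠ 0 := by
  by_contra hc
  push_neg at hc
  apply hA
  ext i j
  have h := congrFun (hc (Pi.single j 1)) i
  rw [Matrix.mulVec_single_one] at h
  simpa using h

omit [CharP F 3] in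
lemma mulVec_apply3 (A : Matrix (Fin 3) (Fin 3) F) (u : Fin 3 → F) (i : Fin 3) :
    A.mulVec u i = A i 0 * u 0 + A i 1 * u 1 + A i 2 * u 2 := by
  simp [Matrix.mulVec, dotProduct, Fin.sum_univ_three]

omit [CharP F 3] in
lemma mul_col (A G : Matrix (Fin 3) (Fin 3) F) (i j : Fin 3) :
    (A * G) i j = A.mulVec (fun k => G k j) i := by
  simp [Matrix.mul_apply, Matrix.mulVec, dotProduct]

/-- Assembly: if `x * g = g * e` with `g` invertible, `e` normalizing a nontrivial
2-subgroup `H` containing `dEl`, then `x` normalizes the conjugated subgroup. -/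
lemma assemble {x : Matrix.SpecialLinearGroup (Fin 3) F}
    {H : Subgroup (Matrix.SpecialLinearGroup (Fin 3) F)}
    (hHp : IsPGroup 2 H) (hd : dEl ∈ H)
    {gmat : Matrix (Fin 3) (Fin 3) F} (hg : IsUnit gmat)
    {e : Matrix.SpecialLinearGroup (Fin 3) F} (he : e ∈ Subgroup.normalizer (H : Set (Matrix.SpecialLinearGroup (Fin 3) F)))
    (hxe : x.val * gmat = gmat * e.val) :
    ∃ P : Subgroup (Matrix.SpecialLinearGroup (Fin 3) F),
      P ≠ ⊥ ∧ IsPGroup 2 P ∧ x ∈ Subgroup.normalizer (P : Set (Matrix.SpecialLinearGroup (Fin 3) F)) := by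
  set u := hg.unit with hu
  have huv : u.val = gmat := hg.unit_spec
  set ψ := conjSL u with hψ
  have hxeq : x = ψ e := by
    apply Subtype.ext
    show x.val = u.val * e.val * u⁻¹.val
    calc x.val = x.val * (u.val * u⁻¹.val) := by rw [u.mul_inv, mul_one]
      _ = (x.val * gmat) * u⁻¹.val := by rw [huv, mul_assoc]
      _ = gmat * e.val * u⁻¹.val := by rw [hxe]
      _ = u.val * e.val * u⁻¹.val := by rw [huv]
  refine ⟨H.map ψ.toMonoidHom, ?_, hHp.map _, ?_⟩
  · intro hbot
    have hmem : ψ dEl ∈ H.map ψ.toMonoidHom := ⟨dEl, hd, rfl⟩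
    rw [hbot, Subgroup.mem_bot] at hmem
    exact dEl_ne_one (ψ.injective (by rw [hmem, _root_.map_one]))
  · rw [← Subgroup.map_equiv_normalizer_eq H ψ]
    exact ⟨e, he, hxeq.symm⟩

end SL3TwoSubgroupAux

/-- Let `F` be a finite field of characteristic 3 and let `x ∈ SL₃(F)` have order 3.
Then `x` normalizes some nontrivial 2-subgroup of `SL₃(F)`. -/
theorem SL3_char_three_orderThree_normalizes_two_subgroup
    {F : Type*} [Field F] [Fintype F] [CharP F 3]
    (x : Matrix.SpecialLinearGroup (Fin 3) F) (hx : orderOf x = 3) :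
    ∃ P : Subgroup (Matrix.SpecialLinearGroup (Fin 3) F),
      P ≠ ⊥ ∧ IsPGroup 2 P ∧ x ∈ Subgroup.normalizer (P : Set (Matrix.SpecialLinearGroup (Fin 3) F)) := by
  classical
  open SL3TwoSubgroupAux in
  have hx3 : x ^ 3 = 1 := by
    have h := pow_orderOf_eq_one x
    rwa [hx] at h
  set M := x.val with hMdef
  have hM3 : M ^ 3 = 1 := by
    rw [hMdef, ← Matrix.SpecialLinearGroup.coe_pow, hx3, Matrix.SpecialLinearGroup.coe_one]
  have h3F : (3 : F) = 0 := by
    have := CharP.cast_eq_zero F 3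
    exact_mod_cast this
  have htriple : ∀ A : Matrix (Fin 3) (Fin 3) F, A + A + A = 0 := by
    intro A
    have h : A + A + A = (3 : F) • A := by
      ext i j
      simp [Matrix.smul_apply]
      ring
    rw [h, h3F, zero_smul]
  set N := M - 1 with hNdef
  have hM1 : M = N + 1 := by rw [hNdef]; noncomm_ring
  have hxne : x ≠ 1 := by
    intro h; rw [h, orderOf_one] at hx; omega
  have hNne : N ≠ 0 := by
    intro h
    apply hxne
    apply Subtype.ext
    rw [Matrix.SpecialLinearGroup.coe_one]
    show M = 1
    rw [← sub_eq_zero]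
    exact h
  have hN3 : N * N * N = 0 := by
    have hexp : (N + 1) ^ 3 = N * N * N + (N * N + N * N + N * N) + (N + N + N) + 1 := by
      noncomm_ring
    have h2 : N * N * N + (N * N + N * N + N * N) + (N + N + N) + 1 = 1 := by
      rw [← hexp, ← hM1, hM3]
    rw [htriple (N * N), htriple N, add_zero, add_zero, add_eq_right] at h2
    exact h2
  by_cases hN2 : N * N = 0
  · -- Jordan type (2,1): conjugate to mmat, which centralizes a subgroup of order 2.
    obtain ⟨v, hv⟩ := exists_mulVec_ne_zero hNne
    -- find w in ker N, not in span of N v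
    have hw : ∃ w, N.mulVec w = 0 ∧ w ∉ Submodule.span F {N.mulVec v} := by
      by_contra hc
      push_neg at hc
      have hker : LinearMap.ker N.mulVecLin ≤ Submodule.span F {N.mulVec v} := by
        intro y hy
        exact hc y (by simpa [Matrix.mulVecLin_apply] using hy)
      have hrange : LinearMap.range N.mulVecLin ≤ LinearMap.ker N.mulVecLin := by
        rintro y ⟨z, rfl⟩
        simp [LinearMap.mem_ker, Matrix.mulVecLin_apply, Matrix.mulVec_mulVec, hN2]
      have h1 : Module.finrank F (LinearMap.ker N.mulVecLin) ≤ 1 := by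
        calc Module.finrank F (LinearMap.ker N.mulVecLin)
            ≤ Module.finrank F (Submodule.span F {N.mulVec v}) := Submodule.finrank_mono hker
          _ ≤ 1 := le_of_eq (finrank_span_singleton hv)
      have h2 : Module.finrank F (LinearMap.range N.mulVecLin) ≤ 1 :=
        le_trans (Submodule.finrank_mono hrange) h1
      have h3 := LinearMap.finrank_range_add_finrank_ker N.mulVecLin
      rw [Module.finrank_pi] at h3
      simp at h3
      omega
    obtain ⟨w, hw0, hwspan⟩ := hw
    have f1 : N * M = N := by
      have h : N * M = N * N + N := by rw [hM1]; noncomm_ring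
      rw [h, hN2, zero_add]
    have f2 : M * M = (N + N) + 1 := by
      have h : M * M = N * N + ((N + N) + 1) := by rw [hM1]; noncomm_ring
      rw [h, hN2, zero_add]
    have e5 : M.mulVec v = v + N.mulVec v := by
      rw [hM1, Matrix.add_mulVec, Matrix.one_mulVec]
      abel
    set b : Fin 3 → (Fin 3 → F) := ![v, M.mulVec v, w] with hbdef
    set gmat : Matrix (Fin 3) (Fin 3) F := Matrix.of (fun i j => b j i) with hgdef
    have hli : LinearIndependent F b := by
      rw [Fintype.linearIndependent_iff]
      intro gc hg
      rw [Fin.sum_univ_three] at hg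
      have hb0 : b 0 = v := rfl
      have hb1 : b 1 = M.mulVec v := rfl
      have hb2 : b 2 = w := rfl
      rw [hb0, hb1, hb2] at hg
      -- apply N
      have hgN := congrArg N.mulVec hg
      simp only [Matrix.mulVec_add, Matrix.mulVec_smul, Matrix.mulVec_zero,
        Matrix.mulVec_mulVec, f1, hw0, smul_zero] at hgN
      have hgN2 : (gc 0 + gc 1) • N.mulVec v = 0 := by
        rw [add_smul]
        rw [add_zero] at hgN
        exact hgN
      have hab : gc 0 + gc 1 = 0 := by
        rcases smul_eq_zero.mp hgN2 with h | h
        · exact h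
        · exact absurd h hv
      -- expand hg
      rw [e5] at hg
      have hg2 : (gc 0 + gc 1) • v + gc 1 • N.mulVec v + gc 2 • w = 0 := by
        rw [← hg]; module
      rw [hab, zero_smul, zero_add] at hg2
      have hc0 : gc 2 = 0 := by
        by_contra hcne
        apply hwspan
        rw [Submodule.mem_span_singleton]
        refine ⟨(gc 2)⁻¹ * -(gc 1), ?_⟩
        have h' : gc 2 • w = -(gc 1 • N.mulVec v) := eq_neg_of_add_eq_zero_right hg2
        have hthis : (gc 2)⁻¹ • gc 2 • w = (gc 2)⁻¹ • -(gc 1 • N.mulVec v) := by rw [h']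
        rw [smul_smul, inv_mul_cancel₀ hcne, one_smul] at hthis
        rw [hthis]
        module
      rw [hc0, zero_smul, add_zero] at hg2
      have hb0' : gc 1 = 0 := by
        rcases smul_eq_zero.mp hg2 with h | h
        · exact h
        · exact absurd h hv
      have ha0 : gc 0 = 0 := by rw [hb0', add_zero] at hab; exact hab
      intro i
      fin_cases i
      · exact ha0
      · exact hb0'
      · exact hc0
    have hgu : IsUnit gmat := by
      rw [← Matrix.linearIndependent_cols_iff_isUnit]
      exact hli
    -- column identities
    have hcol1 : M.mulVec (M.mulVec v) = N.mulVec v + N.mulVec v + v := by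
      rw [Matrix.mulVec_mulVec, f2, Matrix.add_mulVec, Matrix.add_mulVec,
        Matrix.one_mulVec]
    have hcol2 : M.mulVec w = w := by
      rw [hM1, Matrix.add_mulVec, Matrix.one_mulVec, hw0, zero_add]
    have hMg : M * gmat = gmat * mmat := by
      ext i j
      rw [mul_col M gmat i j, mul_col gmat mmat i j, mulVec_apply3 gmat]
      have hg0 : ∀ k, gmat k j = b j k := fun k => rfl
      have hgi0 : gmat i 0 = v i := rfl
      have hgi1 : gmat i 1 = M.mulVec v i := rfl
      have hgi2 : gmat i 2 = w i := rfl
      fin_cases j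
      · -- col 0 of mmat is (0,1,0); target: M.mulVec v i
        show M.mulVec (fun k => gmat k 0) i
          = gmat i 0 * mmat 0 0 + gmat i 1 * mmat 1 0 + gmat i 2 * mmat 2 0
        have : (fun k => gmat k 0) = v := rfl
        rw [this, hgi0, hgi1, hgi2]
        simp [mmat]
      · -- col 1 of mmat is (-1,2,0)
        show M.mulVec (fun k => gmat k 1) i
          = gmat i 0 * mmat 0 1 + gmat i 1 * mmat 1 1 + gmat i 2 * mmat 2 1
        have h1 : (fun k => gmat k 1) = M.mulVec v := rfl
        rw [h1, hcol1, hgi0, hgi1, hgi2]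
        have h2 : (2 : F) = -1 := by linear_combination h3F
        simp [mmat, h2, e5]
        linear_combination h3F * ((N *ᵥ v) i + v i)
      · show M.mulVec (fun k => gmat k 2) i
          = gmat i 0 * mmat 0 2 + gmat i 1 * mmat 1 2 + gmat i 2 * mmat 2 2
        have h1 : (fun k => gmat k 2) = w := rfl
        rw [h1, hcol2, hgi0, hgi1, hgi2]
        simp [mmat]
    -- assemble
    refine assemble (sdiag_isPGroup (Q := fun f => f 0 = f 1) (hQ1 := rfl)
      (hQm := blockQmul)) (dEl_mem (by norm_num)) hgu mEl_mem_normalizer ?_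
    exact hMg
  · -- regular unipotent: conjugate to the 3-cycle permutation matrix
    obtain ⟨v, hv⟩ := exists_mulVec_ne_zero hN2
    have e1 : (N * N) * M = N * N := by
      have h : (N * N) * M = N * N * N + N * N := by rw [hM1]; noncomm_ring
      rw [h, hN3, zero_add]
    have e2 : (N * N) * (M * M) = N * N := by
      have h : (N * N) * (M * M) = (N * N * N) * N + (N * N * N + N * N * N) + N * N := by
        rw [hM1]; noncomm_ring
      rw [h, hN3]
      simp
    have e3 : N * M = N + N * N := by rw [hM1]; noncomm_ring
    have e4 : N * (M * M) = N + (N * N + N * N) := by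
      have h : N * (M * M) = N * N * N + (N * N + N * N) + N := by rw [hM1]; noncomm_ring
      rw [h, hN3, zero_add]
      abel
    have e5 : M.mulVec v = v + N.mulVec v := by
      rw [hM1, Matrix.add_mulVec, Matrix.one_mulVec]
      abel
    have he6m : M * M = N * N + (N + N) + 1 := by rw [hM1]; noncomm_ring
    have e6 : (M * M).mulVec v = v + (N.mulVec v + N.mulVec v) + (N * N).mulVec v := by
      rw [he6m, Matrix.add_mulVec, Matrix.add_mulVec, Matrix.add_mulVec, Matrix.one_mulVec]
      abel
    set b : Fin 3 → (Fin 3 → F) := ![v, M.mulVec v, (M * M).mulVec v] with hbdef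
    set gmat : Matrix (Fin 3) (Fin 3) F := Matrix.of (fun i j => b j i) with hgdef
    have hli : LinearIndependent F b := by
      rw [Fintype.linearIndependent_iff]
      intro gc hg
      rw [Fin.sum_univ_three] at hg
      have hb0 : b 0 = v := rfl
      have hb1 : b 1 = M.mulVec v := rfl
      have hb2 : b 2 = (M * M).mulVec v := rfl
      rw [hb0, hb1, hb2] at hg
      have hgK := congrArg (N * N).mulVec hg
      simp only [Matrix.mulVec_add, Matrix.mulVec_smul, Matrix.mulVec_zero,
        Matrix.mulVec_mulVec, e1, e2] at hgK
      have habc : gc 0 + gc 1 + gc 2 = 0 := by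
        have h' : (gc 0 + gc 1 + gc 2) • (N * N).mulVec v = 0 := by
          rw [add_smul, add_smul]
          exact hgK
        rcases smul_eq_zero.mp h' with h | h
        · exact h
        · exact absurd h hv
      have hgN := congrArg N.mulVec hg
      simp only [Matrix.mulVec_add, Matrix.mulVec_smul, Matrix.mulVec_zero,
        Matrix.mulVec_mulVec, e3, e4] at hgN
      simp only [Matrix.add_mulVec] at hgN
      have hbc : gc 1 + (gc 2 + gc 2) = 0 := by
        have hexp : gc 0 • N.mulVec v + gc 1 • (N.mulVec v + (N * N).mulVec v)
            + gc 2 • (N.mulVec v + ((N * N).mulVec v + (N * N).mulVec v))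
            = (gc 0 + gc 1 + gc 2) • N.mulVec v
              + (gc 1 + (gc 2 + gc 2)) • (N * N).mulVec v := by module
        rw [hexp, habc, zero_smul, zero_add] at hgN
        rcases smul_eq_zero.mp hgN with h | h
        · exact h
        · exact absurd h hv
      have hc2 : gc 2 = 0 := by
        rw [e5, e6] at hg
        have hexp2 : gc 0 • v + gc 1 • (v + N.mulVec v)
            + gc 2 • (v + (N.mulVec v + N.mulVec v) + (N * N).mulVec v)
            = (gc 0 + gc 1 + gc 2) • v + (gc 1 + (gc 2 + gc 2)) • N.mulVec v
              + gc 2 • (N * N).mulVec v := by module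
        rw [hexp2, habc, hbc, zero_smul, zero_smul, zero_add, zero_add] at hg
        rcases smul_eq_zero.mp hg with h | h
        · exact h
        · exact absurd h hv
      have hc1 : gc 1 = 0 := by
        rw [hc2] at hbc
        simpa using hbc
      have hc0 : gc 0 = 0 := by
        rw [hc1, hc2] at habc
        simpa using habc
      intro i
      fin_cases i
      · exact hc0
      · exact hc1
      · exact hc2
    have hgu : IsUnit gmat := by
      rw [← Matrix.linearIndependent_cols_iff_isUnit]
      exact hli
    have hcolB : M.mulVec ((M * M).mulVec v) = v := by
      rw [Matrix.mulVec_mulVec]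
      have h : M * (M * M) = M ^ 3 := by rw [pow_succ, pow_succ, pow_one]; noncomm_ring
      rw [h, hM3, Matrix.one_mulVec]
    have hMg : M * gmat = gmat * cmat := by
      ext i j
      rw [mul_col M gmat i j, mul_col gmat cmat i j, mulVec_apply3 gmat]
      have hgi0 : gmat i 0 = v i := rfl
      have hgi1 : gmat i 1 = M.mulVec v i := rfl
      have hgi2 : gmat i 2 = (M * M).mulVec v i := rfl
      fin_cases j
      · show M.mulVec (fun k => gmat k 0) i
          = gmat i 0 * cmat 0 0 + gmat i 1 * cmat 1 0 + gmat i 2 * cmat 2 0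
        have h1 : (fun k => gmat k 0) = v := rfl
        rw [h1, hgi0, hgi1, hgi2]
        simp [cmat, Matrix.vecHead, Matrix.vecTail]
      · show M.mulVec (fun k => gmat k 1) i
          = gmat i 0 * cmat 0 1 + gmat i 1 * cmat 1 1 + gmat i 2 * cmat 2 1
        have h1 : (fun k => gmat k 1) = M.mulVec v := rfl
        rw [h1, Matrix.mulVec_mulVec, hgi0, hgi1, hgi2]
        simp [cmat, Matrix.vecHead, Matrix.vecTail]
      · show M.mulVec (fun k => gmat k 2) i
          = gmat i 0 * cmat 0 2 + gmat i 1 * cmat 1 2 + gmat i 2 * cmat 2 2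
        have h1 : (fun k => gmat k 2) = (M * M).mulVec v := rfl
        rw [h1, hcolB, hgi0, hgi1, hgi2]
        simp [cmat, Matrix.vecHead, Matrix.vecTail]
    exact assemble (sdiag_isPGroup (Q := fun _ => True) (hQ1 := trivial)
      (hQm := fun _ _ _ _ => trivial)) (dEl_mem trivial) hgu cEl_mem_normalizer hMg
end

section
/- Let F be a finite field with |F| = 3^a where a is odd, let x ∈ SL_4(F) be an element of order 3 with (x - 1)² ≠ 0 (as a 4×4 matrix; i.e., x has Jordan form J_3 ⊕ J_1), and let w ∈ SL_4(F) be an element whose order is a power of 2 and which commutes with x. Then w = 1 or w = -1 (the negative of the identity matrix); i.e., every 2-power order element of SL_4(F) commuting with x is central. -/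
open Module

private lemma aux_mod_four (a : ℕ) (ha : Odd a) : 3 ^ a % 4 = 3 := by
  obtain ⟨m, hm⟩ := ha
  have ha2 : a = 2 * m + 1 := by omega
  rw [ha2]
  have h9 : (9 : ℕ) ^ m % 4 = 1 := by rw [Nat.pow_mod]; norm_num
  have key : (3:ℕ) ^ (2 * m + 1) = 3 * 9 ^ m := by
    rw [pow_succ, pow_mul]; norm_num; ring
  omega

private lemma aux_two_part {n k : ℕ} (hd6 : n ∣ 6) (hd2 : n ∣ 2 ^ k) : n ∣ 2 := by
  obtain ⟨j, hjk, hj⟩ := (Nat.dvd_prime_pow Nat.prime_two).mp hd2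
  have hj1 : j ≤ 1 := by
    by_contra hgt
    have h4 : (4 : ℕ) ∣ n := by
      have : (2:ℕ) ^ 2 ∣ 2 ^ j := pow_dvd_pow 2 (by omega)
      rw [hj]; simpa using this
    have : (4:ℕ) ∣ 6 := dvd_trans h4 hd6
    omega
  rw [hj]
  interval_cases j
  · exact ⟨2, rfl⟩
  · rfl

private lemma aux_cc_sq {F : Type*} [Field F] [Fintype F] (a k : ℕ) (ha : Odd a)
    (hcard : Fintype.card F = 3 ^ a) (cc : F) (h : cc ^ (2 ^ k) = 1) : cc * cc = 1 := by
  have hcc0 : cc ≠ 0 := by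
    intro h0; rw [h0, zero_pow (by positivity)] at h; exact zero_ne_one h
  have h1 : orderOf cc ∣ 2 ^ k := orderOf_dvd_of_pow_eq_one h
  have h2 : orderOf cc ∣ 3 ^ a - 1 := by
    apply orderOf_dvd_of_pow_eq_one
    rw [← hcard]; exact FiniteField.pow_card_sub_one_eq_one cc hcc0
  obtain ⟨j, hjk, hj⟩ := (Nat.dvd_prime_pow Nat.prime_two).mp h1
  have hmod := aux_mod_four a ha
  have hj1 : j ≤ 1 := by
    by_contra hgt
    have h4 : (4 : ℕ) ∣ orderOf cc := by
      have : (2:ℕ) ^ 2 ∣ 2 ^ j := pow_dvd_pow 2 (by omega)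
      rw [hj]; simpa using this
    have h5 : (4 : ℕ) ∣ 3 ^ a - 1 := dvd_trans h4 h2
    have hge : 1 ≤ 3 ^ a := Nat.one_le_pow _ _ (by norm_num)
    omega
  have hdd : orderOf cc ∣ 2 := by
    rw [hj]
    interval_cases j
    · exact ⟨2, rfl⟩
    · rfl
  have := orderOf_dvd_iff_pow_eq_one.mp hdd
  rwa [pow_two] at this

set_option maxHeartbeats 2000000 in
/-- Let `F` be a finite field with `|F| = 3^a`, `a` odd, let `x ∈ SL₄(F)` have order 3
with `(x - 1)² ≠ 0` (Jordan form `J₃ ⊕ J₁`), and let `w ∈ SL₄(F)` have 2-power order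
and commute with `x`. Then `w = 1` or `w = -1`, i.e. `w` is central. -/
theorem SL4_three_pow_odd_two_power_commuting_is_central
    {F : Type*} [Field F] [Fintype F] (a : ℕ) (ha : Odd a)
    (hcard : Fintype.card F = 3 ^ a)
    (x w : Matrix.SpecialLinearGroup (Fin 4) F) (hx : orderOf x = 3)
    (hreg : ((x : Matrix (Fin 4) (Fin 4) F) - 1) ^ 2 ≠ 0)
    (hw : ∃ k : ℕ, orderOf w = 2 ^ k) (hcomm : w * x = x * w) :
    (w : Matrix (Fin 4) (Fin 4) F) = 1 ∨ (w : Matrix (Fin 4) (Fin 4) F) = -1 := by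
  classical
  obtain ⟨k, hk⟩ := hw
  -- characteristic 3
  haveI hchar : CharP F 3 := by
    obtain ⟨n, hp, hc⟩ := FiniteField.card F (ringChar F)
    have h3 : ringChar F = 3 := by
      have hd : ringChar F ∣ 3 ^ a := by
        rw [← hcard, hc]; exact dvd_pow_self _ n.ne_zero
      exact (Nat.prime_dvd_prime_iff_eq hp (by norm_num)).mp (hp.dvd_of_dvd_pow hd)
    exact h3 ▸ ringChar.charP F
  haveI : Fact (Nat.Prime 3) := ⟨by norm_num⟩
  haveI : CharP (Matrix (Fin 4) (Fin 4) F) 3 := Matrix.charP 3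
  set X : Matrix (Fin 4) (Fin 4) F := (x : Matrix (Fin 4) (Fin 4) F) with hX
  set M : Matrix (Fin 4) (Fin 4) F := (w : Matrix (Fin 4) (Fin 4) F) with hM
  set N : Matrix (Fin 4) (Fin 4) F := X - 1 with hNdef
  -- basic matrix facts
  have hX3 : X ^ 3 = 1 := by
    have : x ^ 3 = 1 := by rw [← hx]; exact pow_orderOf_eq_one x
    rw [hX, ← Matrix.SpecialLinearGroup.coe_pow, this]; rfl
  have hN3 : N ^ 3 = 0 := by
    rw [hNdef, sub_pow_char_of_commute _ (Commute.one_right X), hX3, one_pow, sub_self]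
  have hM2k : M ^ (2 ^ k) = 1 := by
    have : w ^ (2 ^ k) = 1 := by rw [← hk]; exact pow_orderOf_eq_one w
    rw [hM, ← Matrix.SpecialLinearGroup.coe_pow, this]; rfl
  have hdetM : M.det = 1 := w.2
  have hMN : M * N = N * M := by
    have hXM : M * X = X * M := by
      have h := congrArg (fun z : Matrix.SpecialLinearGroup (Fin 4) F =>
        (z : Matrix (Fin 4) (Fin 4) F)) hcomm
      simpa [Matrix.SpecialLinearGroup.coe_mul] using h
    rw [hNdef, mul_sub, sub_mul, hXM, mul_one, one_mul]
  -- pass to endomorphisms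
  set E : Matrix (Fin 4) (Fin 4) F ≃ₐ[F] Module.End F (Fin 4 → F) :=
    Matrix.toLinAlgEquiv' with hE
  set f : Module.End F (Fin 4 → F) := E N with hf
  set g : Module.End F (Fin 4 → F) := E M with hgdef
  have hf3 : f * f * f = 0 := by
    rw [hf, ← map_mul, ← map_mul, ← pow_three', hN3, map_zero]
  have hf2 : f * f ≠ 0 := by
    rw [hf, ← map_mul, ← pow_two]
    intro h0
    exact hreg (by simpa using E.injective (by rw [h0, map_zero]))
  have hfg : f * g = g * f := by
    rw [hf, hgdef, ← map_mul, ← map_mul, hMN]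
  have hg2k : g ^ (2 ^ k) = 1 := by
    rw [hgdef, ← map_pow, hM2k, map_one]
  -- choose v with f (f v) ≠ 0
  have hv : ∃ v : Fin 4 → F, f (f v) ≠ 0 := by
    by_contra h
    push_neg at h
    exact hf2 (LinearMap.ext fun v => by simpa [Module.End.mul_apply] using h v)
  obtain ⟨v, hb1ne⟩ := hv
  set b1 : Fin 4 → F := f (f v) with hb1def
  set b2 : Fin 4 → F := f v with hb2def
  have hfb1 : f b1 = 0 := by
    have := congrFun (congrArg DFunLike.coe hf3) v
    simpa [Module.End.mul_apply] using this
  have hfb2 : f b2 = b1 := rfl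
  -- find k4 in ker f outside span b1
  have hker : ∃ z, f z = 0 ∧ z ∉ Submodule.span F {b1} := by
    by_contra h
    push_neg at h
    have hspan : ∀ z, z ∈ Submodule.span F ({b1, b2, v} : Set (Fin 4 → F)) := by
      intro z
      have h1 : f (f (f z)) = 0 := by
        have := congrFun (congrArg DFunLike.coe hf3) z
        simpa [Module.End.mul_apply] using this
      obtain ⟨t, ht⟩ := Submodule.mem_span_singleton.mp (h _ h1)
      have h2 : f (f (z - t • v)) = 0 := by
        simp [map_sub, map_smul, ← hb2def, ← hb1def, ← ht]
      obtain ⟨s, hs⟩ := Submodule.mem_span_singleton.mp (h _ h2)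
      have h3 : f (z - t • v - s • b2) = 0 := by
        simp [map_sub, map_smul, hfb2, ← hs]
      obtain ⟨r, hr⟩ := Submodule.mem_span_singleton.mp (h _ h3)
      have hz : z = r • b1 + s • b2 + t • v := by
        have := hr.symm
        rw [sub_sub, sub_eq_iff_eq_add] at this
        rw [this]; abel
      rw [hz]
      refine Submodule.add_mem _ (Submodule.add_mem _ ?_ ?_) ?_ <;>
        exact Submodule.smul_mem _ _ (Submodule.subset_span (by simp))
    have h4 : (4 : ℕ) ≤ 3 := by
      calc (4:ℕ) = finrank F (Fin 4 → F) := by simp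
      _ = finrank F (⊤ : Submodule F (Fin 4 → F)) := (finrank_top F _).symm
      _ ≤ finrank F (Submodule.span F ({b1, b2, v} : Set (Fin 4 → F))) :=
          Submodule.finrank_mono (fun z _ => hspan z)
      _ ≤ 3 := by
          refine le_trans (finrank_span_le_card _) ?_
          rw [Set.toFinset_insert, Set.toFinset_insert, Set.toFinset_singleton]
          refine le_trans (Finset.card_insert_le _ _) (Nat.succ_le_succ ?_)
          exact le_trans (Finset.card_insert_le _ _) (by simp)
    omega
  obtain ⟨k4, hk4, hk4s⟩ := hker
  -- linear independence
  have hli : LinearIndependent F ![b1, b2, k4, v] := by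
    rw [Fintype.linearIndependent_iff]
    intro c hc
    rw [Fin.sum_univ_four] at hc
    simp only [Matrix.cons_val_zero, Matrix.cons_val_one, Matrix.head_cons,
      Matrix.cons_val_two, Matrix.tail_cons, Matrix.cons_val_three] at hc
    have h2 : c 3 • b1 = 0 := by
      have := congrArg (fun z => f (f z)) hc
      simpa [map_add, map_smul, hk4, hfb1, hfb2, ← hb1def, map_zero] using this
    have hc3 : c 3 = 0 := by
      rcases smul_eq_zero.mp h2 with h | h
      · exact h
      · exact absurd h hb1ne
    have h1 : c 1 • b1 = 0 := by
      have := congrArg (fun z => f z) hc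
      simpa [map_add, map_smul, hk4, hfb1, hfb2, hc3, map_zero] using this
    have hc1 : c 1 = 0 := by
      rcases smul_eq_zero.mp h1 with h | h
      · exact h
      · exact absurd h hb1ne
    have h0 : c 0 • b1 + c 2 • k4 = 0 := by
      rw [hc1, hc3] at hc; simpa using hc
    have hc2 : c 2 = 0 := by
      by_contra hne
      apply hk4s
      rw [Submodule.mem_span_singleton]
      refine ⟨-(c 0) / c 2, ?_⟩
      have hkk : c 2 • k4 = -(c 0 • b1) := by
        linear_combination (norm := module) h0
      have hk2 : k4 = (c 2)⁻¹ • -(c 0 • b1) := by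
        rw [← hkk, inv_smul_smul₀ hne]
      rw [hk2, smul_neg, smul_smul, ← neg_smul]
      congr 1
      field_simp
    have hc0 : c 0 = 0 := by
      rw [hc2] at h0
      simp only [zero_smul, add_zero] at h0
      rcases smul_eq_zero.mp h0 with h | h
      · exact h
      · exact absurd h hb1ne
    intro i; fin_cases i <;> assumption
  have hcard4 : Fintype.card (Fin 4) = finrank F (Fin 4 → F) := by simp
  set B := basisOfLinearIndependentOfCardEqFinrank hli hcard4 with hBdef
  have hB : ⇑B = ![b1, b2, k4, v] := coe_basisOfLinearIndependentOfCardEqFinrank hli hcard4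
  have hB0 : B 0 = b1 := by rw [hB]; rfl
  have hB1 : B 1 = b2 := by rw [hB]; rfl
  have hB2 : B 2 = k4 := by rw [hB]; rfl
  have hB3 : B 3 = v := by rw [hB]; rfl
  -- coefficients of g v
  set aa : Fin 4 → F := fun i => B.repr (g v) i with haa
  have hgv : g v = aa 0 • b1 + aa 1 • b2 + aa 2 • k4 + aa 3 • v := by
    have := B.sum_repr (g v)
    rw [Fin.sum_univ_four, hB0, hB1, hB2, hB3] at this
    exact this.symm
  set cc : F := aa 3 with hcc
  -- action of g on basis vectors
  have hgfz : ∀ z, g (f z) = f (g z) := by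
    intro z
    have := congrFun (congrArg DFunLike.coe hfg) z
    simpa [Module.End.mul_apply] using this.symm
  have hgb2 : g b2 = aa 1 • b1 + cc • b2 := by
    rw [hb2def, hgfz, hgv]
    simp [map_add, map_smul, hfb1, hfb2, hk4, ← hb2def]
  have hgb1 : g b1 = cc • b1 := by
    have : b1 = f b2 := rfl
    rw [this, hgfz, hgb2]
    simp [map_add, map_smul, hfb1, hfb2]
  -- g k4 in span of b1, k4
  have hfgk4 : f (g k4) = 0 := by rw [← hgfz, hk4, map_zero]
  set e : Fin 4 → F := fun i => B.repr (g k4) i with he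
  have hgk4exp : g k4 = e 0 • b1 + e 1 • b2 + e 2 • k4 + e 3 • v := by
    have := B.sum_repr (g k4)
    rw [Fin.sum_univ_four, hB0, hB1, hB2, hB3] at this
    exact this.symm
  have he13 : e 1 • b1 + e 3 • b2 = 0 := by
    have := congrArg (fun z => f z) hgk4exp
    simpa [hfgk4, map_add, map_smul, hfb1, hfb2, hk4, ← hb2def] using this.symm
  have hindep2 := Fintype.linearIndependent_iff.mp hli ![e 1, e 3, 0, 0] (by
    rw [Fin.sum_univ_four]
    simpa [Matrix.vecHead, Matrix.vecTail] using he13)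
  have he1 : e 1 = 0 := by simpa using hindep2 0
  have he3 : e 3 = 0 := by simpa using hindep2 1
  have hgk4' : g k4 = e 0 • b1 + e 2 • k4 := by
    rw [hgk4exp, he1, he3]; simp
  -- matrix of g in basis B
  have hW : LinearMap.toMatrix B B g =
      !![cc, aa 1, e 0, aa 0; 0, cc, 0, aa 1; 0, 0, e 2, aa 2; 0, 0, 0, cc] := by
    ext i j
    rw [LinearMap.toMatrix_apply]
    fin_cases j <;> beta_reduce <;>
      simp only [Fin.zero_eta, Fin.mk_one, Fin.reduceFinMk]
    · rw [hB0, hgb1, ← hB0, map_smul, Basis.repr_self]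
      fin_cases i <;> simp [Finsupp.single_apply, Matrix.vecHead, Matrix.vecTail]
    · rw [hB1, hgb2, ← hB0, ← hB1, map_add, map_smul, map_smul, Basis.repr_self,
        Basis.repr_self]
      fin_cases i <;> simp [Finsupp.single_apply, Matrix.vecHead, Matrix.vecTail]
    · rw [hB2, hgk4', ← hB0, ← hB2, map_add, map_smul, map_smul, Basis.repr_self,
        Basis.repr_self]
      fin_cases i <;> simp [Finsupp.single_apply, Matrix.vecHead, Matrix.vecTail]
    · rw [hB3, hgv, ← hB0, ← hB1, ← hB2, ← hB3,
        map_add, map_add, map_add, map_smul, map_smul, map_smul, map_smul]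
      simp only [Basis.repr_self]
      fin_cases i <;> simp [Finsupp.single_apply, Matrix.vecHead, Matrix.vecTail]
  -- determinant
  have hdet1 : cc * cc * e 2 * cc = 1 := by
    have h1 : (LinearMap.toMatrix B B g).det = LinearMap.det g := LinearMap.det_toMatrix B g
    have h2 : LinearMap.det g = M.det := by
      rw [hgdef, hE]
      have heq : (Matrix.toLinAlgEquiv' M : Module.End F (Fin 4 → F)) = Matrix.toLin' M :=
        LinearMap.ext fun u => by rw [Matrix.toLinAlgEquiv'_apply, Matrix.toLin'_apply]
      rw [heq, LinearMap.det_toLin']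
    have h3 : (!![cc, aa 1, e 0, aa 0; 0, cc, 0, aa 1; 0, 0, e 2, aa 2; 0, 0, 0, cc]).det
        = cc * cc * e 2 * cc := by
      simp [Matrix.det_succ_row_zero, Fin.sum_univ_succ]
      ring
    rw [← h3, ← hW, h1, h2, hdetM]
  -- cc ^ (2^k) = 1
  have hgpow : ∀ n : ℕ, (g ^ n) b1 = cc ^ n • b1 := by
    intro n
    induction n with
    | zero => simp
    | succ n ih =>
      rw [pow_succ, Module.End.mul_apply, hgb1, map_smul, ih, smul_smul, pow_succ]
      ring_nf
  have hccpow : cc ^ (2 ^ k) = 1 := by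
    have h1 : (g ^ (2 ^ k)) b1 = b1 := by rw [hg2k]; rfl
    rw [hgpow] at h1
    by_contra hne
    have : (cc ^ (2 ^ k) - 1) • b1 = 0 := by rw [sub_smul, h1, one_smul, sub_self]
    rcases smul_eq_zero.mp this with h' | h'
    · exact hne (sub_eq_zero.mp h')
    · exact hb1ne h'
  -- cc * cc = 1 from 2-part of 3^a - 1
  have hcc2 : cc * cc = 1 := aux_cc_sq a k ha hcard cc hccpow
  -- e 2 = cc
  have he2 : e 2 = cc := by
    have h1 : e 2 * cc = 1 := by
      calc e 2 * cc = cc * cc * e 2 * cc := by rw [hcc2]; ring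
      _ = 1 := hdet1
    calc e 2 = e 2 * (cc * cc) := by rw [hcc2, mul_one]
    _ = (e 2 * cc) * cc := by ring
    _ = cc := by rw [h1, one_mul]
  -- nilpotency of W - cc • 1
  have hnil : (LinearMap.toMatrix B B g - cc • 1) ^ 3 = 0 := by
    rw [hW, he2]
    rw [pow_succ, pow_two]
    ext i j
    fin_cases i <;> fin_cases j <;>
      simp [Matrix.mul_apply, Fin.sum_univ_four, Matrix.one_apply, Matrix.sub_apply,
        Matrix.smul_apply, Matrix.vecHead, Matrix.vecTail]
  -- transfer to M
  have hMnil : (M - cc • 1) ^ 3 = 0 := by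
    have h1 : LinearMap.toMatrixAlgEquiv B g = LinearMap.toMatrix B B g := rfl
    have h2 : (LinearMap.toMatrixAlgEquiv B) ((g - cc • 1) ^ 3) = 0 := by
      rw [map_pow, map_sub, map_smul, map_one, h1, hnil]
    have h3 : (g - cc • 1) ^ 3 = 0 := by
      apply (LinearMap.toMatrixAlgEquiv B).injective
      rw [h2, map_zero]
    have h4 : E ((M - cc • 1) ^ 3) = 0 := by
      rw [map_pow, map_sub, map_smul, map_one, ← hgdef, h3]
    apply E.injective
    rw [h4, map_zero]
  -- M ^ 3 = cc • 1
  have hM3 : M ^ 3 = cc • 1 := by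
    have hcm : Commute (M - cc • 1) ((cc : F) • (1 : Matrix (Fin 4) (Fin 4) F)) :=
      (Commute.one_right _).smul_right cc
    have h5 := add_pow_char_of_commute (p := 3) hcm
    rw [sub_add_cancel] at h5
    rw [h5, hMnil, zero_add, smul_pow, one_pow]
    congr 1
    calc cc ^ 3 = cc * cc * cc := by ring
    _ = cc := by rw [hcc2, one_mul]
  -- conclude
  rcases mul_self_eq_one_iff.mp hcc2 with h1 | h1
  · left
    have hM3' : M ^ 3 = 1 := by rw [hM3, h1, one_smul]
    have hd3 : orderOf M ∣ 3 := orderOf_dvd_of_pow_eq_one hM3'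
    have hd2 : orderOf M ∣ 2 ^ k := orderOf_dvd_of_pow_eq_one hM2k
    have hcop : Nat.gcd 3 (2 ^ k) = 1 := Nat.Coprime.pow_right k (by norm_num)
    have h1' : orderOf M ∣ 1 := hcop ▸ Nat.dvd_gcd hd3 hd2
    have : orderOf M = 1 := Nat.dvd_one.mp h1'
    exact orderOf_eq_one_iff.mp this
  · right
    have hM3' : M ^ 3 = -1 := by rw [hM3, h1, neg_smul, one_smul]
    have h6 : M ^ 6 = 1 := by
      have : M ^ 6 = (M ^ 3) ^ 2 := by rw [← pow_mul]
      rw [this, hM3']; simp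
    have hd6 : orderOf M ∣ 6 := orderOf_dvd_of_pow_eq_one h6
    have hd2 : orderOf M ∣ 2 ^ k := orderOf_dvd_of_pow_eq_one hM2k
    have hMsq : M ^ 2 = 1 := orderOf_dvd_iff_pow_eq_one.mp (aux_two_part hd6 hd2)
    calc M = M * M ^ 2 := by rw [hMsq, mul_one]
    _ = M ^ 3 := by rw [← pow_succ']
    _ = -1 := hM3'
end

section
/- Let F be a finite field of characteristic 2 and let x ∈ GL_3(F) act irreducibly on F³, i.e., the only F-subspaces of F³ invariant under x are 0 and F³. If P is a 2-subgroup of GL_3(F) normalized by x, then P is trivial. (Hence x normalizes no nontrivial 2-subgroup of GL_3(F).) -/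
open Matrix

/-- Let `F` be a finite field of characteristic 2 and let `x ∈ GL₃(F)` act irreducibly
on `F³` (the only `x`-invariant subspaces are `0` and `F³`). Then every 2-subgroup of
`GL₃(F)` normalized by `x` is trivial. -/
theorem GL3_char_two_irreducible_normalizes_no_two_subgroup
    {F : Type*} [Field F] [Fintype F] [CharP F 2]
    (x : Matrix.GeneralLinearGroup (Fin 3) F)
    (hirr : ∀ W : Submodule F (Fin 3 → F),
      (∀ v ∈ W, Matrix.mulVec (x : Matrix (Fin 3) (Fin 3) F) v ∈ W) → W = ⊥ ∨ W = ⊤)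
    (P : Subgroup (Matrix.GeneralLinearGroup (Fin 3) F))
    (hP : IsPGroup 2 P) (hxP : x ∈ Subgroup.normalizer (P : Set (Matrix.GeneralLinearGroup (Fin 3) F))) :
    P = ⊥ := by
  classical
  haveI : Fact (Nat.Prime 2) := ⟨Nat.prime_two⟩
  -- action of P on nonzero vectors
  letI act : MulAction P {v : Fin 3 → F // v ≠ 0} :=
    { smul := fun g v => ⟨Matrix.mulVec (((g : Matrix.GeneralLinearGroup (Fin 3) F) :
        Matrix (Fin 3) (Fin 3) F)) v.1, by
        intro h
        apply v.2
        have := congrArg (Matrix.mulVec (((g : Matrix.GeneralLinearGroup (Fin 3) F)⁻¹ :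
          Matrix.GeneralLinearGroup (Fin 3) F) : Matrix (Fin 3) (Fin 3) F)) h
        rwa [Matrix.mulVec_mulVec, Matrix.mulVec_zero, ← Units.val_mul, inv_mul_cancel,
          Units.val_one, Matrix.one_mulVec] at this⟩
      one_smul := fun v => Subtype.ext (by
        show Matrix.mulVec _ v.1 = v.1
        simp)
      mul_smul := fun g h v => Subtype.ext (by
        show Matrix.mulVec (((g * h : P) : Matrix.GeneralLinearGroup (Fin 3) F) :
            Matrix (Fin 3) (Fin 3) F) v.1
          = Matrix.mulVec (((g : Matrix.GeneralLinearGroup (Fin 3) F) :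
            Matrix (Fin 3) (Fin 3) F))
            (Matrix.mulVec (((h : Matrix.GeneralLinearGroup (Fin 3) F) :
            Matrix (Fin 3) (Fin 3) F)) v.1)
        rw [Matrix.mulVec_mulVec]
        congr 1) }
  have smul_def : ∀ (g : P) (v : {v : Fin 3 → F // v ≠ 0}),
      (g • v).1 = Matrix.mulVec (((g : Matrix.GeneralLinearGroup (Fin 3) F) :
        Matrix (Fin 3) (Fin 3) F)) v.1 := fun g v => rfl
  -- the cardinality of nonzero vectors is odd
  have hcard : ¬ (2 ∣ Nat.card {v : Fin 3 → F // v ≠ 0}) := by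
    have h2 : Fintype.card F % 2 = 0 :=
      FiniteField.even_card_of_char_two (by rw [ringChar.eq_iff]; infer_instance)
    have hpos : 0 < Fintype.card F := Fintype.card_pos
    have hc : Nat.card {v : Fin 3 → F // v ≠ 0} = Fintype.card F ^ 3 - 1 := by
      rw [Nat.card_eq_fintype_card, Fintype.card_subtype_compl, Fintype.card_subtype_eq,
        Fintype.card_fun]
      simp
    rw [hc]
    intro hdvd
    have h3 : Fintype.card F ^ 3 % 2 = 0 := by
      have := Nat.pow_mod (Fintype.card F) 3 2
      simp [h2] at this
      omega
    have h4 : 1 ≤ Fintype.card F ^ 3 := Nat.one_le_pow _ _ hpos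
    omega
  obtain ⟨v0, hv0⟩ := hP.nonempty_fixed_point_of_prime_not_dvd_card
    {v : Fin 3 → F // v ≠ 0} hcard
  simp only [MulAction.mem_fixedPoints] at hv0
  -- the fixed-point submodule
  let W : Submodule F (Fin 3 → F) :=
    { carrier := {v | ∀ g : P, Matrix.mulVec (((g : Matrix.GeneralLinearGroup (Fin 3) F) :
        Matrix (Fin 3) (Fin 3) F)) v = v}
      add_mem' := by
        intro a b ha hb g
        rw [Matrix.mulVec_add, ha g, hb g]
      zero_mem' := by intro g; rw [Matrix.mulVec_zero]
      smul_mem' := by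
        intro c a ha g
        rw [Matrix.mulVec_smul, ha g] }
  have hmemW : ∀ v, (v ∈ W ↔ ∀ g : P,
      Matrix.mulVec (((g : Matrix.GeneralLinearGroup (Fin 3) F) :
      Matrix (Fin 3) (Fin 3) F)) v = v) := fun v => Iff.rfl
  -- W is x-invariant
  have hinv : ∀ v ∈ W, Matrix.mulVec ((x : Matrix.GeneralLinearGroup (Fin 3) F) :
      Matrix (Fin 3) (Fin 3) F) v ∈ W := by
    intro v hv
    rw [hmemW]
    intro g
    have hg' : x⁻¹ * (g : Matrix.GeneralLinearGroup (Fin 3) F) * x ∈ P := by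
      refine (Subgroup.mem_normalizer_iff.mp hxP (x⁻¹ * (g : _) * x)).mpr ?_
      have heq : x * (x⁻¹ * (g : Matrix.GeneralLinearGroup (Fin 3) F) * x) * x⁻¹
          = (g : Matrix.GeneralLinearGroup (Fin 3) F) := by group
      rw [heq]; exact g.2
    have key := (hmemW v).mp hv ⟨x⁻¹ * (g : _) * x, hg'⟩
    rw [Matrix.mulVec_mulVec, ← Units.val_mul,
      show (g : Matrix.GeneralLinearGroup (Fin 3) F) * x
        = x * (x⁻¹ * (g : Matrix.GeneralLinearGroup (Fin 3) F) * x) by group,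
      Units.val_mul, ← Matrix.mulVec_mulVec]
    rw [show ((x⁻¹ * (g : Matrix.GeneralLinearGroup (Fin 3) F) * x : _) :
      Matrix (Fin 3) (Fin 3) F).mulVec v = v from key]
  -- W is nonzero, hence all of F³
  have hW : W = ⊤ := by
    rcases hirr W hinv with h | h
    · exfalso
      have hv0W : v0.1 ∈ W := by
        rw [hmemW]
        intro g
        have := congrArg Subtype.val (hv0 g)
        rwa [smul_def] at this
      rw [h, Submodule.mem_bot] at hv0W
      exact v0.2 hv0W
    · exact h
  -- hence every element of P is the identity
  rw [Subgroup.eq_bot_iff_forall]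
  intro g hg
  have hfix : ∀ v : Fin 3 → F,
      Matrix.mulVec ((g : Matrix (Fin 3) (Fin 3) F)) v = v := by
    intro v
    have hvW : v ∈ W := by rw [hW]; trivial
    exact (hmemW v).mp hvW ⟨g, hg⟩
  ext1
  rw [Units.val_one]
  ext i j
  have := congrFun (hfix (Pi.single j 1)) i
  rw [Matrix.mulVec_single] at this
  simpa [Matrix.one_apply, Pi.single_apply, eq_comm] using this
end

section
/- Let q be an odd prime power with q ≡ 1 (mod 3), let F be the finite field with q elements, and let x be an element of order 3 in PGL_3(q) := GL_3(F) / Z(GL_3(F)). Then x normalizes some nontrivial 2-subgroup of PGL_3(q). -/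
open Matrix Polynomial

section Aux

variable {F : Type*} [Field F]

lemma center_GL3_iff (u : GL (Fin 3) F) :
    u ∈ Subgroup.center (GL (Fin 3) F) ↔
      ∃ r : F, (u : Matrix (Fin 3) (Fin 3) F) = Matrix.scalar (Fin 3) r := by
  constructor
  · intro hu
    have h := Subgroup.mem_center_iff.mp hu
    have key : ∀ t : TransvectionStruct (Fin 3) F,
        Commute t.toMatrix (u : Matrix (Fin 3) (Fin 3) F) := by
      intro t
      have hdet : Matrix.det t.toMatrix ≠ 0 := by
        rw [t.det]; exact one_ne_zero
      have := h (Matrix.GeneralLinearGroup.mkOfDetNeZero t.toMatrix hdet)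
      have := congrArg Units.val this
      simpa [Matrix.GeneralLinearGroup.mkOfDetNeZero, Matrix.GeneralLinearGroup.mk',
        Matrix.unitOfDetInvertible, Commute, SemiconjBy] using this
    obtain ⟨r, hr⟩ := Matrix.mem_range_scalar_of_commute_transvectionStruct key
    exact ⟨r, hr.symm⟩
  · rintro ⟨r, hr⟩
    refine Subgroup.mem_center_iff.mpr fun g => Units.ext ?_
    show (g : Matrix (Fin 3) (Fin 3) F) * u = u * g
    rw [hr]
    exact (Matrix.scalar_commute r (fun r' => mul_comm r r')
      (g : Matrix (Fin 3) (Fin 3) F)).symm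

lemma center_GL3_iff_smul (u : GL (Fin 3) F) :
    u ∈ Subgroup.center (GL (Fin 3) F) ↔
      ∃ r : F, (u : Matrix (Fin 3) (Fin 3) F) = r • (1 : Matrix (Fin 3) (Fin 3) F) := by
  rw [center_GL3_iff]
  refine exists_congr fun r => ?_
  rw [Matrix.scalar_apply, Matrix.smul_one_eq_diagonal]

variable [Fintype F]

lemma two_ne_zero_of_odd_card {q : ℕ} (hq : Odd q) (hcard : Fintype.card F = q) :
    (2 : F) ≠ 0 := by
  intro h2
  haveI : CharP F (ringChar F) := ringChar.charP F
  obtain ⟨n, hp, hcard'⟩ := FiniteField.card F (ringChar F)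
  have hdvd : ringChar F ∣ 2 := (CharP.cast_eq_zero_iff F (ringChar F) 2).mp (by exact_mod_cast h2)
  have hp2 : ringChar F = 2 := (Nat.prime_dvd_prime_iff_eq hp Nat.prime_two).mp hdvd
  rw [hcard, hp2] at hcard'
  rw [hcard'] at hq
  exact (Nat.not_even_iff_odd.mpr hq) (Nat.even_pow.mpr ⟨even_iff_two_dvd.mpr dvd_rfl, n.pos.ne'⟩)

lemma three_ne_zero_of_card_mod {q : ℕ} (hmod : q % 3 = 1) (hcard : Fintype.card F = q) :
    (3 : F) ≠ 0 := by
  intro h3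
  haveI : CharP F (ringChar F) := ringChar.charP F
  obtain ⟨n, hp, hcard'⟩ := FiniteField.card F (ringChar F)
  have hdvd : ringChar F ∣ 3 := (CharP.cast_eq_zero_iff F (ringChar F) 3).mp (by exact_mod_cast h3)
  have hp3 : ringChar F = 3 := (Nat.prime_dvd_prime_iff_eq hp Nat.prime_three).mp hdvd
  rw [hcard, hp3] at hcard'
  have : 3 ∣ q := hcard' ▸ dvd_pow_self 3 n.pos.ne'
  omega

end Aux

section AuxMain

variable {F : Type*} [Field F]


lemma caseA_involution (h3 : (3:F) ≠ 0) (h2 : (2:F) ≠ 0)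
    (ω : F) (hω3 : ω ^ 3 = 1) (hω1 : ω ≠ 1)
    (u : Matrix (Fin 3) (Fin 3) F) (hu : u ^ 3 = 1)
    (hnon : ∀ r : F, u ≠ r • (1 : Matrix (Fin 3) (Fin 3) F)) :
    ∃ s : Matrix (Fin 3) (Fin 3) F, s * s = 1 ∧ s * u = u * s ∧
      ∀ r : F, s ≠ r • (1 : Matrix (Fin 3) (Fin 3) F) := by
  have hωs : ω ^ 2 + ω + 1 = 0 := by
    have hfac : (ω - 1) * (ω ^ 2 + ω + 1) = 0 := by linear_combination hω3
    rcases mul_eq_zero.mp hfac with h | h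
    · exact absurd (sub_eq_zero.mp h) hω1
    · exact h
  set P : F → F[X] := fun a => 1 + C a * X + (C a) ^ 2 * X ^ 2 with hP
  have hkey : ∀ a : F, a ^ 3 = 1 → P a * P a = 3 * P a + (2 + C a * X) * (X ^ 3 - 1) := by
    intro a ha
    have hCa : (C a) ^ 3 = 1 := by rw [← C_pow, ha, C_1]
    simp only [hP]
    linear_combination (2 * X ^ 3 + C a * X ^ 4) * hCa
  have hsum : P 1 + C ω * P (ω ^ 2) + (C ω) ^ 2 * P ω = 3 * X := by
    have hCω3 : (C ω) ^ 3 = 1 := by rw [← C_pow, hω3, C_1]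
    have hCωs : (C ω) ^ 2 + C ω + 1 = 0 := by
      rw [← C_pow, show (1:F[X]) = C 1 from C_1.symm, ← C_add, ← C_add, hωs, C_0]
    simp only [hP, C_pow, C_1]
    linear_combination (1 + X ^ 2) * hCωs + (2 * X + X ^ 2 * (C ω + (C ω) ^ 2)) * hCω3
  have haev0 : aeval u (X ^ 3 - 1 : F[X]) = 0 := by simp [hu]
  have hQQ : ∀ a : F, a ^ 3 = 1 →
      aeval u (P a) * aeval u (P a) = (3:F) • aeval u (P a) := by
    intro a ha
    rw [← _root_.map_mul, hkey a ha, map_add, _root_.map_mul (aeval u) (2 + C a * X),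
      haev0, mul_zero, add_zero, _root_.map_mul, map_ofNat, Algebra.smul_def, map_ofNat]
  have hsumQ : aeval u (P 1) + ω • aeval u (P (ω ^ 2)) + (ω ^ 2) • aeval u (P ω)
      = (3:F) • u := by
    have h := congrArg (aeval u) hsum
    simp only [map_add, _root_.map_mul, map_pow, aeval_C, aeval_X, map_ofNat] at h
    rw [Algebra.smul_def, Algebra.smul_def, Algebra.smul_def, map_pow, map_ofNat]
    exact h
  -- one of the three projections is not scalar
  have hchoice : ∃ a : F, a ^ 3 = 1 ∧ ∀ r : F, aeval u (P a) ≠ r • (1 : Matrix (Fin 3) (Fin 3) F) := by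
    by_contra hcon
    push_neg at hcon
    obtain ⟨r₁, hr₁⟩ := hcon 1 (one_pow 3)
    obtain ⟨r₂, hr₂⟩ := hcon (ω ^ 2) (by rw [← pow_mul, mul_comm, pow_mul, hω3, one_pow])
    obtain ⟨r₃, hr₃⟩ := hcon ω hω3
    apply hnon ((3:F)⁻¹ * (r₁ + ω * r₂ + ω ^ 2 * r₃))
    have : (3:F) • u = (r₁ + ω * r₂ + ω ^ 2 * r₃) • (1 : Matrix (Fin 3) (Fin 3) F) := by
      rw [← hsumQ, hr₁, hr₂, hr₃, smul_smul, smul_smul]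
      rw [add_smul, add_smul]
    calc u = (3:F)⁻¹ • ((3:F) • u) := by rw [smul_smul, inv_mul_cancel₀ h3, one_smul]
    _ = (3:F)⁻¹ • ((r₁ + ω * r₂ + ω ^ 2 * r₃) • (1 : Matrix (Fin 3) (Fin 3) F)) := by rw [this]
    _ = ((3:F)⁻¹ * (r₁ + ω * r₂ + ω ^ 2 * r₃)) • (1 : Matrix (Fin 3) (Fin 3) F) := by
        rw [smul_smul]
  obtain ⟨a, ha3, hQa⟩ := hchoice
  set k : F := 2 * (3:F)⁻¹ with hk
  have hkne : k ≠ 0 := mul_ne_zero h2 (inv_ne_zero h3)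
  set Qa := aeval u (P a) with hQadef
  refine ⟨1 - k • Qa, ?_, ?_, ?_⟩
  · have expand : (1 - k • Qa) * (1 - k • Qa)
        = 1 - (2 * k) • Qa + (k * k) • (Qa * Qa) := by
      simp only [sub_mul, mul_sub, mul_one, one_mul, smul_mul_assoc, mul_smul_comm,
        smul_smul, two_mul, add_smul]
      module
    rw [expand, hQQ a ha3, smul_smul]
    have : k * k * 3 = 2 * k := by
      rw [hk]; field_simp
    rw [this, sub_add_cancel]
  · have hcomm : Qa * u = u * Qa := by
      have : aeval u (P a) * aeval u (X : F[X]) = aeval u (X : F[X]) * aeval u (P a) := by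
        rw [← _root_.map_mul, ← _root_.map_mul, mul_comm]
      simpa [aeval_X] using this
    rw [sub_mul, mul_sub, one_mul, mul_one, smul_mul_assoc, mul_smul_comm, hcomm]
  · intro r hr
    apply hQa (k⁻¹ * (1 - r))
    have : k • Qa = (1 - r) • (1 : Matrix (Fin 3) (Fin 3) F) := by
      rw [sub_smul, one_smul, ← hr]
      abel
    calc Qa = k⁻¹ • (k • Qa) := by rw [smul_smul, inv_mul_cancel₀ hkne, one_smul]
    _ = k⁻¹ • ((1 - r) • (1 : Matrix (Fin 3) (Fin 3) F)) := by rw [this]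
    _ = (k⁻¹ * (1 - r)) • (1 : Matrix (Fin 3) (Fin 3) F) := by rw [smul_smul]


lemma caseB_det_ne_zero (c : F) (hc : ∀ μ : F, μ ^ 3 ≠ c)
    (g : Matrix (Fin 3) (Fin 3) F) (hg : g ^ 3 = c • (1 : Matrix (Fin 3) (Fin 3) F)) :
    (Matrix.of fun i j : Fin 3 => (g ^ (j : ℕ)) i 0).det ≠ 0 := by
  set p3 : F[X] := X ^ 3 - C c with hp3def
  have hp3monic : p3.Monic := monic_X_pow_sub_C c (by norm_num)
  have hdeg3 : p3.natDegree = 3 := natDegree_X_pow_sub_C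
  have hirr : Irreducible p3 := by
    rw [hp3monic.irreducible_iff_roots_eq_zero_of_degree_le_three (by omega) (by omega)]
    by_contra hne
    obtain ⟨r, hr⟩ := Multiset.exists_mem_of_ne_zero hne
    have : p3.eval r = 0 := (mem_roots hp3monic.ne_zero).mp hr
    simp only [hp3def, eval_sub, eval_pow, eval_X, eval_C, sub_eq_zero] at this
    exact hc r this
  intro hdet
  obtain ⟨w, hw0, hw⟩ := (Matrix.exists_mulVec_eq_zero_iff).mpr hdet
  set p : F[X] := C (w 2) * X ^ 2 + C (w 1) * X + C (w 0) with hpdef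
  have hcoeff : p.coeff 0 = w 0 ∧ p.coeff 1 = w 1 ∧ p.coeff 2 = w 2 := by
    refine ⟨?_, ?_, ?_⟩ <;>
      simp [hpdef, coeff_add, coeff_C_mul, coeff_X_pow, coeff_C, coeff_X]
  have hp0 : p ≠ 0 := by
    intro h
    apply hw0
    funext i
    fin_cases i
    · simpa [h] using hcoeff.1.symm
    · simpa [h] using hcoeff.2.1.symm
    · simpa [h] using hcoeff.2.2.symm
  have hpdeg : p.degree < p3.degree := by
    have h1 : p.degree ≤ 2 := degree_quadratic_le
    have h2 : p3.degree = 3 := degree_X_pow_sub_C (by norm_num) c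
    rw [h2]
    exact lt_of_le_of_lt h1 (by decide)
  have hcop : IsCoprime p3 p :=
    hirr.coprime_iff_not_dvd.mpr fun hdvd =>
      hp0 (Polynomial.eq_zero_of_dvd_of_degree_lt hdvd hpdeg)
  obtain ⟨A', B', hAB⟩ := hcop
  have haev3 : aeval g p3 = 0 := by
    simp [hp3def, hg, Algebra.algebraMap_eq_smul_one]
  have hone : aeval g B' * aeval g p = 1 := by
    have := congrArg (aeval g) hAB
    simp only [map_add, _root_.map_mul, haev3, mul_zero, zero_add, _root_.map_one] at this
    exact this
  -- `aeval g p` kills the vector `Pi.single 0 1`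
  have haevp : (aeval g p) = w 2 • g ^ 2 + w 1 • g + w 0 • 1 := by
    simp only [hpdef, map_add, _root_.map_mul, aeval_C, aeval_X, map_pow]
    rw [Algebra.smul_def, Algebra.smul_def, Algebra.smul_def, mul_one]
  have hsingle : ∀ (N : Matrix (Fin 3) (Fin 3) F),
      N.mulVec (Pi.single 0 1) = fun i => N i 0 := by
    intro N; funext i; simp [Matrix.mulVec_single]
  have hkill : (aeval g p).mulVec (Pi.single 0 1) = 0 := by
    rw [hsingle]
    funext i
    have hBw := congrFun hw i
    simp only [Matrix.mulVec, dotProduct, Fin.sum_univ_three, Matrix.of_apply,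
      Pi.zero_apply] at hBw
    norm_num [pow_two, Matrix.one_apply, ite_mul, one_mul, zero_mul] at hBw
    rw [haevp]
    simp only [Matrix.add_apply, Matrix.smul_apply, Matrix.one_apply, smul_eq_mul,
      pow_two, Pi.zero_apply, mul_ite, mul_one, mul_zero]
    by_cases hi : i = 0 <;> simp [hi] at hBw ⊢ <;> linear_combination hBw
  have : (Pi.single 0 1 : Fin 3 → F) = 0 := by
    calc (Pi.single 0 1 : Fin 3 → F)
        = (1 : Matrix (Fin 3) (Fin 3) F).mulVec (Pi.single 0 1) := (Matrix.one_mulVec _).symm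
    _ = (aeval g B' * aeval g p).mulVec (Pi.single 0 1) := by rw [hone]
    _ = (aeval g B').mulVec ((aeval g p).mulVec (Pi.single 0 1)) := by
        rw [Matrix.mulVec_mulVec]
    _ = 0 := by rw [hkill]; simp [Matrix.mulVec_zero]
  have := congrFun this 0
  simp at this


/-- The subgroup of `GL₃` consisting of diagonal matrices with entries `±1`. -/
def signDiagGL (F : Type*) [Field F] : Subgroup (GL (Fin 3) F) where
  carrier := {u | ∃ d : Fin 3 → F, (∀ i, d i = 1 ∨ d i = -1) ∧
    (u : Matrix (Fin 3) (Fin 3) F) = Matrix.diagonal d}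
  one_mem' := ⟨fun _ => 1, fun _ => Or.inl rfl, by simp⟩
  mul_mem' := by
    rintro u v ⟨d, hd, hu⟩ ⟨e, he, hv⟩
    refine ⟨d * e, fun i => ?_, ?_⟩
    · rcases hd i with h | h <;> rcases he i with h' | h' <;>
        simp [Pi.mul_apply, h, h']
    · show (u : Matrix (Fin 3) (Fin 3) F) * v = _
      rw [hu, hv, Matrix.diagonal_mul_diagonal]
      rfl
  inv_mem' := by
    rintro u ⟨d, hd, hu⟩
    have hsq : u * u = 1 := by
      ext i j
      show ((u : Matrix (Fin 3) (Fin 3) F) * u) i j = (1 : Matrix (Fin 3) (Fin 3) F) i j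
      rw [hu, Matrix.diagonal_mul_diagonal]
      have hdd : ∀ i, d i * d i = 1 := fun i => by
        rcases hd i with h | h <;> simp [h]
      simp [Matrix.diagonal_apply, Matrix.one_apply, hdd]
    have : u⁻¹ = u := inv_eq_of_mul_eq_one_right hsq
    exact ⟨d, hd, by rw [this]; exact hu⟩

lemma signDiagGL_sq {u : GL (Fin 3) F} (hu : u ∈ signDiagGL F) : u * u = 1 := by
  obtain ⟨d, hd, hval⟩ := hu
  ext i j
  show ((u : Matrix (Fin 3) (Fin 3) F) * u) i j = (1 : Matrix (Fin 3) (Fin 3) F) i j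
  rw [hval, Matrix.diagonal_mul_diagonal]
  have hdd : ∀ i, d i * d i = 1 := fun i => by
    rcases hd i with h | h <;> simp [h]
  simp [Matrix.diagonal_apply, Matrix.one_apply, hdd]

/-- companion-type monomial matrix -/
def mMat (c : F) : Matrix (Fin 3) (Fin 3) F :=
  Matrix.of fun i j : Fin 3 =>
    if i = 1 ∧ j = 0 then 1 else if i = 2 ∧ j = 1 then 1 else if i = 0 ∧ j = 2 then c else 0

lemma mMat_diag (c : F) (d : Fin 3 → F) :
    mMat c * Matrix.diagonal d = Matrix.diagonal (fun i => d (i + 2)) * mMat c := by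
  ext i j
  fin_cases i <;> fin_cases j <;>
    simp [mMat, Matrix.mul_apply, Fin.sum_univ_three, Matrix.diagonal_apply] <;> ring

lemma diag_mMat (c : F) (d : Fin 3 → F) :
    Matrix.diagonal d * mMat c = mMat c * Matrix.diagonal (fun i => d (i + 1)) := by
  ext i j
  fin_cases i <;> fin_cases j <;>
    simp [mMat, Matrix.mul_apply, Fin.sum_univ_three, Matrix.diagonal_apply] <;> ring

lemma mem_normalizer_of_val_mMat (c : F) (m : GL (Fin 3) F)
    (hm : (m : Matrix (Fin 3) (Fin 3) F) = mMat c) :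
    m ∈ Subgroup.normalizer (signDiagGL F : Set _) := by
  rw [Subgroup.mem_normalizer_iff]
  intro h
  constructor
  · rintro ⟨d, hd, hval⟩
    refine ⟨fun i => d (i + 2), fun i => hd (i + 2), ?_⟩
    show (m : Matrix (Fin 3) (Fin 3) F) * h * (↑(m⁻¹) : Matrix (Fin 3) (Fin 3) F) = _
    rw [hval, hm, mMat_diag, Matrix.mul_assoc, ← hm]
    have : (m : Matrix (Fin 3) (Fin 3) F) * (↑(m⁻¹) : Matrix (Fin 3) (Fin 3) F) = 1 := by
      rw [← Units.val_mul, mul_inv_cancel, Units.val_one]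
    rw [this, Matrix.mul_one]
  · rintro ⟨d, hd, hval⟩
    have hval' : (m : Matrix (Fin 3) (Fin 3) F) * (h : Matrix (Fin 3) (Fin 3) F) *
        (↑(m⁻¹) : Matrix (Fin 3) (Fin 3) F) = Matrix.diagonal d := hval
    refine ⟨fun i => d (i + 1), fun i => hd (i + 1), ?_⟩
    have h1 : (m : Matrix (Fin 3) (Fin 3) F) * (h : Matrix (Fin 3) (Fin 3) F)
        = Matrix.diagonal d * m := by
      have := congrArg (fun X => X * (m : Matrix (Fin 3) (Fin 3) F)) hval'
      simp only [Matrix.mul_assoc] at this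
      rwa [← Units.val_mul, inv_mul_cancel, Units.val_one, Matrix.mul_one] at this
    rw [hm, diag_mMat] at h1
    have h2 : (h : Matrix (Fin 3) (Fin 3) F) = Matrix.diagonal (fun i => d (i + 1)) := by
      have := congrArg (fun X => (↑(m⁻¹) : Matrix (Fin 3) (Fin 3) F) * X) h1
      rw [← hm, ← Matrix.mul_assoc, ← Matrix.mul_assoc, ← Units.val_mul, inv_mul_cancel,
        Units.val_one, Matrix.one_mul, Matrix.one_mul] at this
      exact this
    exact h2

lemma package_lemma (H : Subgroup (GL (Fin 3) F)) (g : GL (Fin 3) F)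
    (hsq : ∀ h ∈ H, h * h = 1)
    (hnt : ∃ h ∈ H, h ∉ Subgroup.center (GL (Fin 3) F))
    (hnorm : g ∈ Subgroup.normalizer (H : Set _)) :
    ∃ P : Subgroup (GL (Fin 3) F ⧸ Subgroup.center (GL (Fin 3) F)),
      P ≠ ⊥ ∧ IsPGroup 2 P ∧
        (QuotientGroup.mk' (Subgroup.center (GL (Fin 3) F)) g) ∈ Subgroup.normalizer (P : Set _) := by
  set π := QuotientGroup.mk' (Subgroup.center (GL (Fin 3) F)) with hπ
  refine ⟨H.map π, ?_, ?_, ?_⟩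
  · obtain ⟨h, hh, hhc⟩ := hnt
    intro hbot
    have hmem : π h ∈ H.map π := Subgroup.mem_map.mpr ⟨h, hh, rfl⟩
    rw [hbot, Subgroup.mem_bot] at hmem
    exact hhc ((QuotientGroup.eq_one_iff h).mp hmem)
  · rintro ⟨y, hy⟩
    obtain ⟨h, hh, hval⟩ := Subgroup.mem_map.mp hy
    refine ⟨1, ?_⟩
    have hy2 : y ^ 2 = 1 := by
      rw [← hval, ← _root_.map_pow, pow_two, hsq h hh, _root_.map_one]
    apply Subtype.ext
    rw [SubmonoidClass.coe_pow]
    simpa using hy2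
  · have hle := Subgroup.le_normalizer_map (H := H) π
    exact hle (Subgroup.mem_map.mpr ⟨g, hnorm, rfl⟩)

end AuxMain

/-- Let `q` be an odd prime power with `q ≡ 1 (mod 3)`, let `F` be the field with `q`
elements, and let `x` be an element of order 3 in `PGL₃(q) = GL₃(F)/Z(GL₃(F))`.
Then `x` normalizes some nontrivial 2-subgroup of `PGL₃(q)`. -/
theorem PGL3_odd_orderThree_normalizes_two_subgroup
    {F : Type*} [Field F] [Fintype F] (q : ℕ)
    (hq : Odd q) (hq' : IsPrimePow q) (hcard : Fintype.card F = q)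
    (hmod : q % 3 = 1)
    (x : Matrix.GeneralLinearGroup (Fin 3) F ⧸
        Subgroup.center (Matrix.GeneralLinearGroup (Fin 3) F))
    (hx : orderOf x = 3) :
    ∃ P : Subgroup (Matrix.GeneralLinearGroup (Fin 3) F ⧸
        Subgroup.center (Matrix.GeneralLinearGroup (Fin 3) F)),
      P ≠ ⊥ ∧ IsPGroup 2 P ∧ x ∈ Subgroup.normalizer (P : Set _) := by
  classical
  set π := QuotientGroup.mk' (Subgroup.center (GL (Fin 3) F)) with hπ
  obtain ⟨g, hg⟩ := QuotientGroup.mk'_surjective (Subgroup.center (GL (Fin 3) F)) x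
  have hx1 : x ≠ 1 := by
    intro h
    rw [h, orderOf_one] at hx
    omega
  have hx3 : x ^ 3 = 1 := by
    have := pow_orderOf_eq_one x
    rwa [hx] at this
  have hg3c : g ^ 3 ∈ Subgroup.center (GL (Fin 3) F) := by
    rw [← QuotientGroup.eq_one_iff (g ^ 3)]
    have : π (g ^ 3) = x ^ 3 := by rw [map_pow, hg]
    rw [← hx3]
    exact this
  obtain ⟨c, hc⟩ := (center_GL3_iff_smul (g ^ 3)).mp hg3c
  have hgval3 : (g : Matrix (Fin 3) (Fin 3) F) ^ 3 = c • 1 := by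
    rw [← Units.val_pow_eq_pow_val, hc]
  have hgnon : ∀ r : F, (g : Matrix (Fin 3) (Fin 3) F) ≠ r • 1 := by
    intro r hr
    apply hx1
    rw [← hg]
    exact (QuotientGroup.eq_one_iff g).mpr ((center_GL3_iff_smul g).mpr ⟨r, hr⟩)
  have h2 : (2 : F) ≠ 0 := two_ne_zero_of_odd_card hq hcard
  have h3 : (3 : F) ≠ 0 := three_ne_zero_of_card_mod hmod hcard
  have hcne : c ≠ 0 := by
    rintro rfl
    have h1 : ((g ^ 3 : GL (Fin 3) F) : Matrix (Fin 3) (Fin 3) F) *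
        (((g ^ 3)⁻¹ : GL (Fin 3) F) : Matrix (Fin 3) (Fin 3) F) = 1 := by
      rw [← Units.val_mul, mul_inv_cancel, Units.val_one]
    rw [hc, zero_smul, zero_mul] at h1
    have := congrFun (congrFun h1 0) 0
    simp [Matrix.one_apply] at this
  by_cases hcube : ∃ μ : F, μ ^ 3 = c
  · -- Case A: the scalar is a cube; there is an involution commuting with g
    obtain ⟨μ, hμ⟩ := hcube
    have hμ0 : μ ≠ 0 := by
      rintro rfl
      rw [zero_pow (by norm_num)] at hμ
      exact hcne hμ.symm
    -- a primitive cube root of unity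
    obtain ⟨ζ, hζ⟩ := exists_prime_orderOf_dvd_card (G := Fˣ) 3
      (by rw [Fintype.card_units, hcard]
          have := hq'.two_le
          omega)
    set ω : F := (ζ : F) with hωdef
    have hω3 : ω ^ 3 = 1 := by
      have : ζ ^ 3 = 1 := by rw [← hζ]; exact pow_orderOf_eq_one ζ
      rw [hωdef, ← Units.val_pow_eq_pow_val, this, Units.val_one]
    have hω1 : ω ≠ 1 := by
      intro h
      have : ζ = 1 := Units.ext (by rw [Units.val_one, ← hωdef, h])
      rw [this, orderOf_one] at hζ
      omega
    set u : Matrix (Fin 3) (Fin 3) F := μ⁻¹ • (g : Matrix (Fin 3) (Fin 3) F) with hudef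
    have hu3 : u ^ 3 = 1 := by
      rw [hudef, _root_.smul_pow, hgval3, smul_smul, inv_pow, hμ, inv_mul_cancel₀ hcne, one_smul]
    have hunon : ∀ r : F, u ≠ r • 1 := by
      intro r hr
      apply hgnon (μ * r)
      have : (g : Matrix (Fin 3) (Fin 3) F) = μ • u := by
        rw [hudef, smul_smul, mul_inv_cancel₀ hμ0, one_smul]
      rw [this, hr, smul_smul]
    obtain ⟨s, hs1, hsu, hsns⟩ := caseA_involution h3 h2 ω hω3 hω1 u hu3 hunon
    set su : GL (Fin 3) F := ⟨s, s, hs1, hs1⟩ with hsudef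
    have hsg : su * g = g * su := by
      apply Units.ext
      show s * (g : Matrix (Fin 3) (Fin 3) F) = (g : Matrix (Fin 3) (Fin 3) F) * s
      have hgu : (g : Matrix (Fin 3) (Fin 3) F) = μ • u := by
        rw [hudef, smul_smul, mul_inv_cancel₀ hμ0, one_smul]
      rw [hgu, mul_smul_comm, smul_mul_assoc, hsu]
    have hsu2 : su * su = 1 := Units.ext hs1
    have hfix : g * su * g⁻¹ = su := by
      rw [← hsg, mul_inv_cancel_right]
    have hfix' : g⁻¹ * su * g = su := by
      rw [mul_assoc, hsg, ← mul_assoc, inv_mul_cancel, one_mul]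
    have h1 : ∀ n : ℤ, g * su ^ n * g⁻¹ = su ^ n := by
      intro n
      have := map_zpow (MulAut.conj g) su n
      rw [MulAut.conj_apply, MulAut.conj_apply, hfix] at this
      exact this
    have h1' : ∀ n : ℤ, g⁻¹ * su ^ n * g = su ^ n := by
      intro n
      have := map_zpow (MulAut.conj g⁻¹) su n
      rw [MulAut.conj_apply, MulAut.conj_apply, inv_inv, hfix'] at this
      exact this
    have hnorm : g ∈ Subgroup.normalizer (Subgroup.zpowers su : Set _) := by
      rw [Subgroup.mem_normalizer_iff]
      intro h
      constructor
      · rintro ⟨n, rfl⟩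
        exact ⟨n, (h1 n).symm⟩
      · rintro ⟨n, hn⟩
        have hn' : su ^ n = g * h * g⁻¹ := hn
        have e1 : g⁻¹ * su ^ n * g = h := by rw [hn']; group
        exact ⟨n, (h1' n).symm.trans e1⟩
    have hsq : ∀ h ∈ Subgroup.zpowers su, h * h = 1 := by
      rintro h ⟨n, rfl⟩
      show su ^ n * su ^ n = 1
      rw [← _root_.zpow_add, ← two_mul, _root_.zpow_mul]
      have h2' : su ^ (2 : ℤ) = 1 := by
        rw [show (2 : ℤ) = ((2 : ℕ) : ℤ) from rfl, zpow_natCast, pow_two, hsu2]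
      rw [h2', _root_.one_zpow]
    have hnt : ∃ h ∈ Subgroup.zpowers su, h ∉ Subgroup.center (GL (Fin 3) F) := by
      refine ⟨su, Subgroup.mem_zpowers su, ?_⟩
      intro hmem
      obtain ⟨r, hr⟩ := (center_GL3_iff_smul su).mp hmem
      exact hsns r hr
    obtain ⟨P, hP1, hP2, hP3⟩ := package_lemma (Subgroup.zpowers su) g hsq hnt hnorm
    rw [hg] at hP3
    exact ⟨P, hP1, hP2, hP3⟩
  · -- Case B: the scalar is not a cube; g is conjugate to a monomial matrix
    push_neg at hcube
    set Bmat : Matrix (Fin 3) (Fin 3) F :=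
      Matrix.of fun i j : Fin 3 => ((g : Matrix (Fin 3) (Fin 3) F) ^ (j : ℕ)) i 0 with hBdef
    have hBdet : Bmat.det ≠ 0 :=
      caseB_det_ne_zero c (fun μ => hcube μ) (g : Matrix (Fin 3) (Fin 3) F) hgval3
    set b : GL (Fin 3) F := Matrix.GeneralLinearGroup.mkOfDetNeZero Bmat hBdet with hbdef
    have hbval : (b : Matrix (Fin 3) (Fin 3) F) = Bmat := rfl
    have hgB : (g : Matrix (Fin 3) (Fin 3) F) * Bmat = Bmat * mMat c := by
      set G : Matrix (Fin 3) (Fin 3) F := (g : Matrix (Fin 3) (Fin 3) F) with hG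
      have hpow3 : G * G ^ 2 = G ^ 3 := by
        have := (pow_succ' G 2).symm
        norm_num at this
        exact this
      ext i j
      rw [Matrix.mul_apply, Matrix.mul_apply]
      fin_cases j
      · simp [hBdef, mMat, Fin.sum_univ_three, Matrix.one_apply, pow_one, Matrix.mul_apply]
      · simp [hBdef, mMat, Fin.sum_univ_three, pow_two, Matrix.mul_apply]
      · have hsum : ∑ k, G i k * (G ^ 2) k 0 = c * (1 : Matrix (Fin 3) (Fin 3) F) i 0 := by
          rw [← Matrix.mul_apply, hpow3, hG, hgval3]
          simp
        simp only [hBdef, Matrix.of_apply, Fin.sum_univ_three] at hsum ⊢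
        norm_num at hsum ⊢
        rw [hsum]
        simp [mMat, Matrix.one_apply]
    set m : GL (Fin 3) F := b⁻¹ * g * b with hmdef
    have hmval : (m : Matrix (Fin 3) (Fin 3) F) = mMat c := by
      show ((b⁻¹ : GL (Fin 3) F) : Matrix (Fin 3) (Fin 3) F) *
        (g : Matrix (Fin 3) (Fin 3) F) * (b : Matrix (Fin 3) (Fin 3) F) = mMat c
      rw [Matrix.mul_assoc, hbval, hgB, ← Matrix.mul_assoc, ← hbval, ← Units.val_mul,
        inv_mul_cancel, Units.val_one, Matrix.one_mul]
    have hmnorm : m ∈ Subgroup.normalizer (signDiagGL F : Set _) := mem_normalizer_of_val_mMat c m hmval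
    set H : Subgroup (GL (Fin 3) F) :=
      (signDiagGL F).map (MulAut.conj b).toMonoidHom with hHdef
    have hnorm : g ∈ Subgroup.normalizer (H : Set _) := by
      rw [hHdef, ← Subgroup.map_equiv_normalizer_eq (signDiagGL F) (MulAut.conj b)]
      refine Subgroup.mem_map.mpr ⟨m, hmnorm, ?_⟩
      show (MulAut.conj b) m = g
      rw [MulAut.conj_apply, hmdef]
      group
    have hsq : ∀ h ∈ H, h * h = 1 := by
      rintro h hh
      obtain ⟨w, hw, rfl⟩ := Subgroup.mem_map.mp hh
      rw [← _root_.map_mul, signDiagGL_sq hw, _root_.map_one]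
    have hnt : ∃ h ∈ H, h ∉ Subgroup.center (GL (Fin 3) F) := by
      set d0 : Fin 3 → F := ![1, 1, -1] with hd0def
      have hd0 : ∀ i, d0 i = 1 ∨ d0 i = -1 := by
        intro i; fin_cases i
        · exact Or.inl rfl
        · exact Or.inl rfl
        · exact Or.inr rfl
      have hd0sq : Matrix.diagonal d0 * Matrix.diagonal d0 = 1 := by
        rw [Matrix.diagonal_mul_diagonal]
        have : ∀ i, d0 i * d0 i = 1 := by
          intro i; rcases hd0 i with h | h <;> rw [h] <;> ring
        ext i j
        simp [Matrix.diagonal_apply, Matrix.one_apply, this]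
      set w0 : GL (Fin 3) F := ⟨Matrix.diagonal d0, Matrix.diagonal d0, hd0sq, hd0sq⟩ with hw0def
      have hw0mem : w0 ∈ signDiagGL F := ⟨d0, hd0, rfl⟩
      refine ⟨(MulAut.conj b).toMonoidHom w0, Subgroup.mem_map.mpr ⟨w0, hw0mem, rfl⟩, ?_⟩
      intro hmem
      obtain ⟨r, hr⟩ := (center_GL3_iff_smul _).mp hmem
      -- conj b w0 = scalar, so w0 itself is scalar
      have hw0val : (w0 : Matrix (Fin 3) (Fin 3) F) = r • 1 := by
        have hval : ((b * w0 * b⁻¹ : GL (Fin 3) F) : Matrix (Fin 3) (Fin 3) F) = r • 1 := by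
          rw [show (b * w0 * b⁻¹ : GL (Fin 3) F) = (MulAut.conj b).toMonoidHom w0 from rfl]
          exact hr
        have : (b⁻¹ * (b * w0 * b⁻¹) * b : GL (Fin 3) F) = w0 := by group
        rw [← this]
        show ((b⁻¹ : GL (Fin 3) F) : Matrix (Fin 3) (Fin 3) F) *
            ((b * w0 * b⁻¹ : GL (Fin 3) F) : Matrix (Fin 3) (Fin 3) F) *
            (b : Matrix (Fin 3) (Fin 3) F) = r • 1
        rw [hval]
        rw [mul_smul_comm, smul_mul_assoc, Matrix.mul_one, ← Units.val_mul, inv_mul_cancel,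
          Units.val_one]
      have h00 := congrFun (congrFun hw0val 0) 0
      have h22 := congrFun (congrFun hw0val 2) 2
      simp [hw0def, hd0def, Matrix.diagonal_apply, Matrix.one_apply] at h00 h22
      rw [← h00] at h22
      apply h2
      linear_combination -h22
    obtain ⟨P, hP1, hP2, hP3⟩ := package_lemma H g hsq hnt hnorm
    rw [hg] at hP3
    exact ⟨P, hP1, hP2, hP3⟩
end
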